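/- (Proposition 2.12(i), concrete form: closedness of direct integrals of quadratic forms) Let (X,𝒳) be a measurable space, μ a σ-finite measure on X, (Z,𝒵,ν) a σ-finite measure space, and (μ_ζ)_{ζ∈Z} a pseudo-disintegration of μ over ν. For each ζ ∈ Z let Q_ζ be a functional on measurable functions X → ℝ with values in [0,∞] such that: (a) Q_ζ(f) = Q_ζ(g) whenever f = g μ_ζ-almost everywhere; (b) Q_ζ is sequentially lower semicontinuous with respect to L²(μ_ζ)-convergence, i.e. whenever fₙ, f are measurable and ∫(fₙ−f)² dμ_ζ → 0 then Q_ζ(f) ≤ liminf_n Q_ζ(fₙ); (c) for every measurable f : X → ℝ the map ζ ↦ Q_ζ(f) is ν-measurable. Define Q(f) := ∫_Z Q_ζ(f) dν(ζ). Then Q is sequentially lower semicontinuous with respect to L²(μ)-convergence: whenever fₙ, f are measurable, square-integrable with respect to μ, and ∫(fₙ−f)² dμ → 0, one has Q(f) ≤ liminf_n Q(fₙ). -/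

import Mathlib

open Filter MeasureTheory ENNReal

/-- A pseudo-disintegration of `μ` over `ν`: a family `μs ζ` of measures on `X` such that
`ζ ↦ μs ζ A` is `ν`-measurable and `μ A = ∫ μs ζ A dν(ζ)` for every measurable `A`. -/
def IsPseudoDisintegration {X Z : Type*} [MeasurableSpace X] [MeasurableSpace Z]
    (μ : MeasureTheory.Measure X) (ν : MeasureTheory.Measure Z)
    (μs : Z → MeasureTheory.Measure X) : Prop :=
  (∀ A : Set X, MeasurableSet A → AEMeasurable (fun ζ => μs ζ A) ν) ∧
    (∀ A : Set X, MeasurableSet A → μ A = ∫⁻ ζ, μs ζ A ∂ν)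

/-- The lintegral of a measurable `ℝ≥0∞`-valued function disintegrates along a
pseudo-disintegration. -/
theorem lintegral_pseudoDisintegration {X Z : Type*} [MeasurableSpace X] [MeasurableSpace Z]
    (μ : Measure X) (ν : Measure Z) (μs : Z → Measure X)
    (hdis : IsPseudoDisintegration μ ν μs) {g : X → ℝ≥0∞} (hg : Measurable g) :
    AEMeasurable (fun ζ => ∫⁻ x, g x ∂μs ζ) ν ∧
      ∫⁻ x, g x ∂μ = ∫⁻ ζ, ∫⁻ x, g x ∂μs ζ ∂ν := by
  refine Measurable.ennreal_induction
    (motive := fun g => AEMeasurable (fun ζ => ∫⁻ x, g x ∂μs ζ) ν ∧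
      ∫⁻ x, g x ∂μ = ∫⁻ ζ, ∫⁻ x, g x ∂μs ζ ∂ν) ?_ ?_ ?_ hg
  · intro c s hs
    have hsimp : ∀ m : Measure X, ∫⁻ x, s.indicator (fun _ => c) x ∂m = c * m s := by
      intro m; exact lintegral_indicator_const hs c
    constructor
    · simpa only [hsimp] using (hdis.1 s hs).const_mul c
    · simp only [hsimp]
      rw [hdis.2 s hs, lintegral_const_mul'' c (hdis.1 s hs)]
  · intro f g hd hf hg' Pf Pg
    have hsimp : ∀ m : Measure X, ∫⁻ x, (f + g) x ∂m = (∫⁻ x, f x ∂m) + ∫⁻ x, g x ∂m := by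
      intro m; exact lintegral_add_left hf _
    constructor
    · simpa only [hsimp] using Pf.1.fun_add Pg.1
    · simp only [hsimp, Pf.2, Pg.2]
      rw [lintegral_add_left' Pf.1]
  · intro f hf hmono Pf
    have hsimp : ∀ m : Measure X, ∫⁻ x, (⨆ n, f n x) ∂m = ⨆ n, ∫⁻ x, f n x ∂m := by
      intro m; exact lintegral_iSup hf hmono
    constructor
    · simpa only [hsimp] using AEMeasurable.iSup (fun n => (Pf n).1)
    · simp only [hsimp]
      rw [lintegral_iSup' (fun n => (Pf n).1)
        (Filter.Eventually.of_forall fun ζ => fun i j hij =>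
          lintegral_mono fun x => hmono hij x)]
      exact congrArg _ (funext fun n => (Pf n).2)

/-- **Proposition 2.12(i), concrete form**: a direct integral `Q(f) = ∫ Q_ζ(f) dν(ζ)` of
quadratic functionals which are lower semicontinuous along `L²(μ_ζ)`-convergence is itself
lower semicontinuous along `L²(μ)`-convergence, where `(μ_ζ)` is a pseudo-disintegration
of `μ` over `ν`. -/
theorem directIntegral_lowerSemicontinuous
    {X Z : Type*} [MeasurableSpace X] [MeasurableSpace Z]
    (μ : Measure X) [SigmaFinite μ] (ν : Measure Z) [SigmaFinite ν]
    (μs : Z → Measure X) (hdis : IsPseudoDisintegration μ ν μs)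
    (Q : Z → (X → ℝ) → ℝ≥0∞)
    (hcongr : ∀ ζ (f g : X → ℝ), Measurable f → Measurable g →
      f =ᵐ[μs ζ] g → Q ζ f = Q ζ g)
    (hlsc : ∀ ζ (f : X → ℝ) (fn : ℕ → X → ℝ), Measurable f → (∀ n, Measurable (fn n)) →
      Tendsto (fun n => ∫⁻ x, ENNReal.ofReal ((fn n x - f x) ^ 2) ∂μs ζ) atTop (nhds 0) →
      Q ζ f ≤ atTop.liminf fun n => Q ζ (fn n))
    (hmeas : ∀ f : X → ℝ, Measurable f → AEMeasurable (fun ζ => Q ζ f) ν)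
    (f : X → ℝ) (fn : ℕ → X → ℝ) (hf : Measurable f) (hfn : ∀ n, Measurable (fn n))
    (hf2 : ∫⁻ x, ENNReal.ofReal (f x ^ 2) ∂μ < ∞)
    (hfn2 : ∀ n, ∫⁻ x, ENNReal.ofReal (fn n x ^ 2) ∂μ < ∞)
    (hconv : Tendsto (fun n => ∫⁻ x, ENNReal.ofReal ((fn n x - f x) ^ 2) ∂μ) atTop (nhds 0)) :
    (∫⁻ ζ, Q ζ f ∂ν) ≤ atTop.liminf fun n => ∫⁻ ζ, Q ζ (fn n) ∂ν := by
  rw [le_liminf_iff]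
  intro b hb
  by_contra hcon
  rw [Filter.not_eventually] at hcon
  have hfreq : ∃ᶠ n in atTop, (∫⁻ ζ, Q ζ (fn n) ∂ν) ≤ b := hcon.mono fun n h => not_lt.1 h
  obtain ⟨φ, hφmono, hφ⟩ := Filter.extraction_of_frequently_atTop hfreq
  -- the squared difference functions along the subsequence φ
  set g : ℕ → X → ℝ≥0∞ := fun n x => ENNReal.ofReal ((fn (φ n) x - f x) ^ 2) with hg
  have hgmeas : ∀ n, Measurable (g n) := fun n =>
    (((hfn (φ n)).sub hf).pow_const 2).ennreal_ofReal
  have hint := fun n => lintegral_pseudoDisintegration μ ν μs hdis (hgmeas n)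
  set H : ℕ → Z → ℝ≥0∞ := fun n ζ => ∫⁻ x, g n x ∂μs ζ with hH
  have hHmeas : ∀ n, AEMeasurable (H n) ν := fun n => (hint n).1
  have hT : Tendsto (fun n => ∫⁻ ζ, H n ζ ∂ν) atTop (nhds 0) := by
    have : (fun n => ∫⁻ ζ, H n ζ ∂ν) = fun n => ∫⁻ x, g n x ∂μ := by
      funext n; exact ((hint n).2).symm
    rw [this]
    exact hconv.comp hφmono.tendsto_atTop
  -- extract a further subsequence with summable integrals
  have hev : ∀ k : ℕ, ∀ᶠ n in atTop, ∫⁻ ζ, H n ζ ∂ν < (2 : ℝ≥0∞)⁻¹ ^ k := by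
    intro k
    refine hT.eventually (gt_mem_nhds ?_)
    exact pos_iff_ne_zero.2 (pow_ne_zero k (by simp))
  obtain ⟨ψ, hψmono, hψ⟩ := Filter.extraction_forall_of_eventually hev
  have htsum : ∑' k, ∫⁻ ζ, H (ψ k) ζ ∂ν ≠ ∞ := by
    refine ne_top_of_le_ne_top ?_ (ENNReal.tsum_le_tsum fun k => (hψ k).le)
    rw [ENNReal.tsum_geometric, ENNReal.one_sub_inv_two]
    simp
  rw [← lintegral_tsum fun k => hHmeas (ψ k)] at htsum
  have hae : ∀ᵐ ζ ∂ν, Tendsto (fun k => H (ψ k) ζ) atTop (nhds 0) := by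
    filter_upwards [ae_lt_top' (AEMeasurable.ennreal_tsum fun k => hHmeas (ψ k)) htsum]
      with ζ hζ
    exact ENNReal.tendsto_atTop_zero_of_tsum_ne_top hζ.ne
  -- a.e. lower semicontinuity along the sub-subsequence
  have hae2 : ∀ᵐ ζ ∂ν, Q ζ f ≤ atTop.liminf fun k => Q ζ (fn (φ (ψ k))) := by
    filter_upwards [hae] with ζ hζ
    exact hlsc ζ f (fun k => fn (φ (ψ k))) hf (fun k => hfn _) hζ
  have key : (∫⁻ ζ, Q ζ f ∂ν) ≤ b := by
    calc (∫⁻ ζ, Q ζ f ∂ν)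
        ≤ ∫⁻ ζ, atTop.liminf (fun k => Q ζ (fn (φ (ψ k)))) ∂ν := lintegral_mono_ae hae2
      _ ≤ atTop.liminf fun k => ∫⁻ ζ, Q ζ (fn (φ (ψ k))) ∂ν :=
          lintegral_liminf_le' fun k => hmeas _ (hfn _)
      _ ≤ b := liminf_le_of_frequently_le'
          (Filter.Eventually.frequently (Filter.Eventually.of_forall fun k => hφ (ψ k)))
  exact absurd hb (not_lt.2 key)
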